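/- Let X be a measurable space with a sigma-finite measure lambda and V : X -> [1,infinity) measurable. Let mu and (mu_n) be probability measures with densities with respect to lambda such that mu_n(x) -> mu(x) for every x and ||mu_n - mu||_V -> 0. Let P be a Markov kernel with invariant distribution mu and (P_n) Markov kernels with invariant distributions mu_n, each V-geometrically ergodic with constants (C,beta) and (C_n,beta_n) satisfying max(C,1/(1-beta)) <= L and max(C_n,1/(1-beta_n)) <= L for a common L < infinity. Suppose that for every x in X there exist finite constants M_x and Mperp_x such that for all n, ||P(x,·) - P_n(x,·)||_V <= M_x * ||mu - mu_n||_V + Mperp_x * |mu(x) - mu_n(x)|. Then for every measurable f with ||f||_V <= 1 and every x in X, R_n f(x) -> R f(x) as n -> infinity, where R_n f(x) := sum over k >= 0 of (P_n^k f(x) - mu_n(f)) and R f(x) := sum over k >= 0 of (P^k f(x) - mu(f)). -/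

import Mathlib

open MeasureTheory ProbabilityTheory Filter ENNReal

/-- The action `P^k f (x) = ∫ f dP^k(x,·)` of the `k`-fold iterate of a kernel on a
function. -/
noncomputable def kernelFunIter {X : Type*} [MeasurableSpace X] (P : Kernel X X) :
    ℕ → (X → ℝ) → X → ℝ
  | 0, f => f
  | n + 1, f => fun x => ∫ y, kernelFunIter P n f y ∂(P x)

/-- The Poisson resolvent `R f(x) = ∑_{k ≥ 0} (P^k f(x) - μ(f))`. -/
noncomputable def resolventFun {X : Type*} [MeasurableSpace X] (P : Kernel X X)
    (μ : Measure X) (f : X → ℝ) (x : X) : ℝ :=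
  ∑' k : ℕ, (kernelFunIter P k f x - ∫ y, f y ∂μ)

/-- The `V`-norm `‖μ - ν‖_V = sup { |∫ f dμ - ∫ f dν| : f measurable, ‖f‖_V ≤ 1 }`. -/
noncomputable def vDistE {X : Type*} [MeasurableSpace X] (V : X → ℝ) (μ ν : Measure X) :
    ℝ≥0∞ :=
  ⨆ f : {f : X → ℝ // Measurable f ∧ ∀ x, |f x| ≤ V x},
    ENNReal.ofReal |(∫ x, f.1 x ∂μ) - ∫ x, f.1 x ∂ν|



lemma vDistE_comm' {X : Type*} [MeasurableSpace X] (V : X → ℝ) (μ ν : Measure X) :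
    vDistE V μ ν = vDistE V ν μ := by
  unfold vDistE
  congr 1; funext g; rw [abs_sub_comm]

lemma ofReal_abs_integral_sub_le {X : Type*} [MeasurableSpace X] {V : X → ℝ}
    (μ ν : Measure X) {g : X → ℝ} (hg : Measurable g) (hgV : ∀ z, |g z| ≤ V z) :
    ENNReal.ofReal |(∫ z, g z ∂μ) - ∫ z, g z ∂ν| ≤ vDistE V μ ν :=
  le_iSup (fun f : {f : X → ℝ // Measurable f ∧ ∀ x, |f x| ≤ V x} =>
    ENNReal.ofReal |(∫ x, f.1 x ∂μ) - ∫ x, f.1 x ∂ν|) ⟨g, hg, hgV⟩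

lemma tendsto_zero_of_ofReal_abs_le {d : ℕ → ℝ} {e : ℕ → ℝ≥0∞}
    (he : Tendsto e atTop (nhds 0))
    (hle : ∀ n, ENNReal.ofReal |d n| ≤ e n) :
    Tendsto d atTop (nhds 0) := by
  have h1 : Tendsto (fun n => ENNReal.ofReal |d n|) atTop (nhds 0) :=
    tendsto_of_tendsto_of_tendsto_of_le_of_le tendsto_const_nhds he (fun n => zero_le) hle
  have h2 : Tendsto (fun n => |d n|) atTop (nhds 0) := by
    have := (ENNReal.tendsto_toReal (a := 0) (by simp)).comp h1
    simpa [Function.comp_def, ENNReal.toReal_ofReal (abs_nonneg _)] using this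
  rw [tendsto_zero_iff_norm_tendsto_zero]
  simpa [Real.norm_eq_abs] using h2

lemma kernelFunIter_measurable {X : Type*} [MeasurableSpace X] (P : Kernel X X)
    [IsSFiniteKernel P] {f : X → ℝ} (hf : Measurable f) :
    ∀ k, Measurable (kernelFunIter P k f)
  | 0 => hf
  | k + 1 => by
    have ih := kernelFunIter_measurable P hf k
    have h : StronglyMeasurable fun q : X × X => kernelFunIter P k f q.2 :=
      (ih.comp measurable_snd).stronglyMeasurable
    exact (h.integral_kernel_prod_right' (κ := P)).measurable

/-- **Pointwise convergence of Poisson resolvents.**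
If `μ_n → μ` pointwise in density and in `V`-norm, `P` and `P_n` are Markov kernels with
invariant distributions `μ` and `μ_n`, uniformly `V`-geometrically ergodic (constants
bounded by `L`), and the bounded-derivative mean value inequality
`‖P(x,·) - P_n(x,·)‖_V ≤ M_x ‖μ - μ_n‖_V + M⊥_x |μ(x) - μ_n(x)|` holds for every `x`,
then for every measurable `f` with `‖f‖_V ≤ 1` and every `x`,
`R_n f(x) → R f(x)`, where `R_n, R` are the Poisson resolvents of `P_n, P`. -/
theorem stmt_18 {X : Type*} [MeasurableSpace X]
    (lam : Measure X) [SigmaFinite lam]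
    (V : X → ℝ) (hVm : Measurable V) (hV1 : ∀ x, 1 ≤ V x)
    (p : X → ℝ) (pn : ℕ → X → ℝ)
    (hpm : Measurable p) (hpnm : ∀ n, Measurable (pn n))
    (hp0 : ∀ x, 0 ≤ p x) (hpn0 : ∀ n x, 0 ≤ pn n x)
    (μ : Measure X) (μn : ℕ → Measure X)
    (hμ : μ = lam.withDensity fun x => ENNReal.ofReal (p x))
    (hμn : ∀ n, μn n = lam.withDensity fun x => ENNReal.ofReal (pn n x))
    [IsProbabilityMeasure μ] (hμnprob : ∀ n, IsProbabilityMeasure (μn n))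
    (hptwise : ∀ x, Tendsto (fun n => pn n x) atTop (nhds (p x)))
    (hVconv : Tendsto (fun n => vDistE V (μn n) μ) atTop (nhds 0))
    (P : Kernel X X) [IsMarkovKernel P] (hPinv : μ.bind (fun x => P x) = μ)
    (Pn : ℕ → Kernel X X) (hPnm : ∀ n, IsMarkovKernel (Pn n))
    (hPninv : ∀ n, (μn n).bind (fun x => (Pn n) x) = μn n)
    (L : ℝ)
    (hergP : ∃ C β : ℝ, β ∈ Set.Ioo (0 : ℝ) 1 ∧ max C (1 / (1 - β)) ≤ L ∧
      ∀ (k : ℕ) (x : X) (f : X → ℝ), Measurable f → (∀ y, |f y| ≤ V y) →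
        |kernelFunIter P k f x - ∫ y, f y ∂μ| ≤ C * β ^ k * V x)
    (hergPn : ∀ n, ∃ C β : ℝ, β ∈ Set.Ioo (0 : ℝ) 1 ∧ max C (1 / (1 - β)) ≤ L ∧
      ∀ (k : ℕ) (x : X) (f : X → ℝ), Measurable f → (∀ y, |f y| ≤ V y) →
        |kernelFunIter (Pn n) k f x - ∫ y, f y ∂(μn n)| ≤ C * β ^ k * V x)
    (hMV : ∀ x : X, ∃ Mx Mpx : ℝ, ∀ n,
      vDistE V (P x) ((Pn n) x)
        ≤ ENNReal.ofReal Mx * vDistE V μ (μn n)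
          + ENNReal.ofReal (Mpx * |p x - pn n x|)) :
    ∀ f : X → ℝ, Measurable f → (∀ x, |f x| ≤ V x) → ∀ x : X,
      Tendsto (fun n => resolventFun (Pn n) (μn n) f x) atTop
        (nhds (resolventFun P μ f x)) := by
  intro f hf hfV x
  obtain ⟨C, β, hβ, hCL, hP⟩ := hergP
  choose Cn βn hβn hCnL hPn using hergPn
  have hzero : ∀ z : X, |(0:ℝ)| ≤ V z := fun z => by
    simpa using le_trans zero_le_one (hV1 z)
  have hC0 : 0 ≤ C := by
    have h := hP 0 x (fun _ => 0) measurable_const hzero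
    simp [kernelFunIter] at h
    nlinarith [hV1 x]
  have hCn0 : ∀ n, 0 ≤ Cn n := by
    intro n
    have h := hPn n 0 x (fun _ => 0) measurable_const hzero
    simp [kernelFunIter] at h
    nlinarith [hV1 x]
  have hCL' : C ≤ L := le_trans (le_max_left _ _) hCL
  have hCnL' : ∀ n, Cn n ≤ L := fun n => le_trans (le_max_left _ _) (hCnL n)
  have hL1 : 1 < L := by
    have h2 : 1 < 1 / (1 - β) := one_lt_one_div (by linarith [hβ.2]) (by linarith [hβ.1])
    exact lt_of_lt_of_le h2 (le_trans (le_max_right _ _) hCL)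
  have hL0 : 0 < L := by linarith
  set r : ℝ := 1 - 1 / L with hrdef
  have hr0 : 0 ≤ r := by
    have : 1 / L ≤ 1 := by rw [div_le_one hL0]; linarith
    simp only [hrdef]; linarith
  have hr1 : r < 1 := by
    have : 0 < 1 / L := by positivity
    simp only [hrdef]; linarith
  have hβnr : ∀ n, βn n ≤ r := by
    intro n
    have h1 : 0 < 1 - βn n := by linarith [(hβn n).2]
    have h2 : 1 / (1 - βn n) ≤ L := le_trans (le_max_right _ _) (hCnL n)
    have h3 : 1 ≤ L * (1 - βn n) := by rw [div_le_iff₀ h1] at h2; linarith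
    have h4 : 1 / L ≤ 1 - βn n := by rw [div_le_iff₀ hL0]; nlinarith
    simp only [hrdef]; linarith
  -- bound on ∫ f dμn
  have hμnfb : ∀ n, |∫ z, f z ∂(μn n)| ≤ (1 + L) * V x := by
    intro n
    have h := hPn n 0 x f hf hfV
    simp [kernelFunIter] at h
    obtain ⟨h1, h2⟩ := abs_le.mp h
    obtain ⟨h3, h4⟩ := abs_le.mp (hfV x)
    rw [abs_le]
    constructor <;> nlinarith [hV1 x, hCnL' n, hCn0 n]
  set B : ℝ := L + (1 + L) * V x with hBdef
  have hB0 : 0 < B := by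
    have := hV1 x
    simp only [hBdef]; nlinarith
  -- uniform bound on iterates for Pn
  have hiterboundn : ∀ n k z, |kernelFunIter (Pn n) k f z| ≤ B * V z := by
    intro n k z
    have h := hPn n k z f hf hfV
    obtain ⟨h1, h2⟩ := abs_le.mp h
    obtain ⟨h3, h4⟩ := abs_le.mp (hμnfb n)
    have hp1 : βn n ^ k ≤ 1 := pow_le_one₀ (le_of_lt (hβn n).1) (le_of_lt (hβn n).2)
    have hp0 : 0 ≤ βn n ^ k := pow_nonneg (le_of_lt (hβn n).1) k
    have hb : Cn n * βn n ^ k ≤ L := by nlinarith [hCn0 n, hCnL' n]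
    have hbV : Cn n * βn n ^ k * V z ≤ L * V z :=
      mul_le_mul_of_nonneg_right hb (by linarith [hV1 z])
    have haux : 0 ≤ (1 + L) * V x := by nlinarith [hV1 x]
    rw [abs_le]
    simp only [hBdef]
    constructor <;> nlinarith [hV1 z, hV1 x]
  -- integrability of V with respect to P y
  have hVint : ∀ y, Integrable V (P y) := by
    intro y
    have htm : ∀ m : ℕ, Measurable (fun z => min (V z) (m:ℝ)) := fun m =>
      hVm.min measurable_const
    have ht0 : ∀ (m : ℕ) z, 0 ≤ min (V z) (m:ℝ) := fun m z =>
      le_min (by linarith [hV1 z]) (Nat.cast_nonneg m)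
    have htV : ∀ (m : ℕ) z, |min (V z) (m:ℝ)| ≤ V z := fun m z => by
      rw [abs_of_nonneg (ht0 m z)]; exact min_le_left _ _
    have htint : ∀ m : ℕ, Integrable (fun z => min (V z) (m:ℝ)) (P y) := by
      intro m
      refine Integrable.mono' (integrable_const (m:ℝ)) ((htm m).aestronglyMeasurable) ?_
      exact ae_of_all _ fun z => by
        rw [Real.norm_eq_abs, abs_of_nonneg (ht0 m z)]; exact min_le_right _ _
    have key : ∀ m : ℕ, ∫ z, min (V z) (m:ℝ) ∂(P y) ≤ (1 + 2*C) * V y := by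
      intro m
      have h1 := hP 1 y (fun z => min (V z) (m:ℝ)) (htm m) (htV m)
      have h0 := hP 0 y (fun z => min (V z) (m:ℝ)) (htm m) (htV m)
      simp [kernelFunIter] at h1 h0
      obtain ⟨h1a, h1b⟩ := abs_le.mp h1
      obtain ⟨h0a, h0b⟩ := abs_le.mp h0
      have hminy : min (V y) (m:ℝ) ≤ V y := min_le_left _ _
      nlinarith [hβ.1, hβ.2, hC0, hV1 y,
        mul_nonneg (mul_nonneg hC0 (by linarith [hβ.2] : (0:ℝ) ≤ 1 - β))
          (by linarith [hV1 y] : (0:ℝ) ≤ V y)]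
    have hmono : Monotone (fun (m : ℕ) (z : X) => ENNReal.ofReal (min (V z) (m:ℝ))) := by
      intro a b hab z
      exact ENNReal.ofReal_le_ofReal (min_le_min le_rfl (Nat.cast_le.mpr hab))
    have hsup : ∀ z, (⨆ m : ℕ, ENNReal.ofReal (min (V z) (m:ℝ))) = ENNReal.ofReal (V z) := by
      intro z
      apply le_antisymm
      · exact iSup_le fun m => ENNReal.ofReal_le_ofReal (min_le_left _ _)
      · have h : ENNReal.ofReal (V z) = ENNReal.ofReal (min (V z) ((⌈V z⌉₊ : ℝ))) := by
          rw [min_eq_left (Nat.le_ceil _)]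
        rw [h]
        exact le_iSup (fun m : ℕ => ENNReal.ofReal (min (V z) (m:ℝ))) ⌈V z⌉₊
    have hlin : ∫⁻ z, ENNReal.ofReal (V z) ∂(P y) ≤ ENNReal.ofReal ((1 + 2*C) * V y) := by
      calc ∫⁻ z, ENNReal.ofReal (V z) ∂(P y)
          = ∫⁻ z, ⨆ m : ℕ, ENNReal.ofReal (min (V z) (m:ℝ)) ∂(P y) :=
            lintegral_congr fun z => (hsup z).symm
        _ = ⨆ m : ℕ, ∫⁻ z, ENNReal.ofReal (min (V z) (m:ℝ)) ∂(P y) :=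
            lintegral_iSup (fun m => (htm m).ennreal_ofReal) hmono
        _ ≤ ENNReal.ofReal ((1 + 2*C) * V y) := iSup_le fun m => by
            rw [← ofReal_integral_eq_lintegral_ofReal (htint m) (ae_of_all _ (ht0 m))]
            exact ENNReal.ofReal_le_ofReal (key m)
    refine ⟨hVm.aestronglyMeasurable, ?_⟩
    rw [hasFiniteIntegral_iff_ofReal (ae_of_all _ fun z => by
      simp only [Pi.zero_apply]; linarith [hV1 z])]
    exact lt_of_le_of_lt hlin ENNReal.ofReal_lt_top
  -- one-step difference tendsto zero
  have hdiff : ∀ (y : X) (g : ℕ → X → ℝ), (∀ n, Measurable (g n)) →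
      (∀ n z, |g n z| ≤ B * V z) →
      Tendsto (fun n => (∫ z, g n z ∂((Pn n) y)) - ∫ z, g n z ∂(P y)) atTop (nhds 0) := by
    intro y g hgm hgb
    obtain ⟨Mx, Mpx, hM⟩ := hMV y
    have hVconv' : Tendsto (fun n => vDistE V μ (μn n)) atTop (nhds 0) := by
      have he : (fun n => vDistE V (μn n) μ) = fun n => vDistE V μ (μn n) :=
        funext fun n => vDistE_comm' V _ _
      rw [← he]; exact hVconv
    have he : Tendsto (fun n => ENNReal.ofReal Mx * vDistE V μ (μn n)
        + ENNReal.ofReal (Mpx * |p y - pn n y|)) atTop (nhds 0) := by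
      have h1 : Tendsto (fun n => ENNReal.ofReal Mx * vDistE V μ (μn n)) atTop (nhds 0) := by
        have := ENNReal.Tendsto.const_mul (a := ENNReal.ofReal Mx) hVconv'
          (Or.inr ENNReal.ofReal_ne_top)
        simpa using this
      have h2 : Tendsto (fun n => ENNReal.ofReal (Mpx * |p y - pn n y|)) atTop (nhds 0) := by
        have hr : Tendsto (fun n => Mpx * |p y - pn n y|) atTop (nhds 0) := by
          have h3 : Tendsto (fun n => p y - pn n y) atTop (nhds 0) := by
            have := (hptwise y).const_sub (p y)
            simpa using this
          have := (h3.abs.const_mul Mpx)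
          simpa using this
        have := ENNReal.tendsto_ofReal hr
        simpa using this
      have := h1.add h2
      simpa using this
    have hd' : Tendsto (fun n => (∫ z, g n z / B ∂((Pn n) y)) - ∫ z, g n z / B ∂(P y))
        atTop (nhds 0) := by
      apply tendsto_zero_of_ofReal_abs_le he
      intro n
      have hadm : ∀ z, |g n z / B| ≤ V z := by
        intro z
        rw [abs_div, abs_of_pos hB0, div_le_iff₀ hB0]
        calc |g n z| ≤ B * V z := hgb n z
          _ = V z * B := mul_comm _ _
      have h1 : ENNReal.ofReal |(∫ z, g n z / B ∂(P y)) - ∫ z, g n z / B ∂((Pn n) y)|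
          ≤ vDistE V (P y) ((Pn n) y) :=
        ofReal_abs_integral_sub_le _ _ ((hgm n).div_const B) hadm
      rw [abs_sub_comm] at h1
      exact le_trans h1 (hM n)
    have heq : ∀ n, (∫ z, g n z ∂((Pn n) y)) - ∫ z, g n z ∂(P y)
        = B * ((∫ z, g n z / B ∂((Pn n) y)) - ∫ z, g n z / B ∂(P y)) := by
      intro n
      rw [mul_sub, ← integral_const_mul, ← integral_const_mul]
      have hcan : ∀ z, B * (g n z / B) = g n z := fun z => by
        field_simp
      simp_rw [hcan]
    have h5 := hd'.const_mul B
    rw [mul_zero] at h5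
    exact h5.congr fun n => (heq n).symm
  -- pointwise convergence of iterates
  have hiterconv : ∀ (k : ℕ) (y : X),
      Tendsto (fun n => kernelFunIter (Pn n) k f y) atTop (nhds (kernelFunIter P k f y)) := by
    intro k
    induction k with
    | zero =>
      intro y
      simp only [kernelFunIter]
      exact tendsto_const_nhds
    | succ k ih =>
      intro y
      have hgm : ∀ n, Measurable (kernelFunIter (Pn n) k f) := fun n => by
        haveI := hPnm n
        exact kernelFunIter_measurable (Pn n) hf k
      have h1 := hdiff y (fun n => kernelFunIter (Pn n) k f) hgm (fun n z => hiterboundn n k z)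
      have h2 : Tendsto (fun n => ∫ z, kernelFunIter (Pn n) k f z ∂(P y)) atTop
          (nhds (∫ z, kernelFunIter P k f z ∂(P y))) := by
        refine tendsto_integral_of_dominated_convergence (fun z => B * V z)
          (fun n => (hgm n).aestronglyMeasurable) ((hVint y).const_mul B)
          (fun n => ae_of_all _ fun z => ?_) (ae_of_all _ fun z => ih z)
        rw [Real.norm_eq_abs]; exact hiterboundn n k z
      have h3 := h1.add h2
      rw [zero_add] at h3
      have h4 : Tendsto (fun n => ∫ z, kernelFunIter (Pn n) k f z ∂((Pn n) y)) atTop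
          (nhds (∫ z, kernelFunIter P k f z ∂(P y))) :=
        h3.congr fun n => by ring
      simp only [kernelFunIter]
      exact h4
  -- convergence of μn f
  have hμf : Tendsto (fun n => ∫ z, f z ∂(μn n)) atTop (nhds (∫ z, f z ∂μ)) := by
    have h0 : Tendsto (fun n => (∫ z, f z ∂(μn n)) - ∫ z, f z ∂μ) atTop (nhds 0) := by
      apply tendsto_zero_of_ofReal_abs_le hVconv
      intro n
      exact ofReal_abs_integral_sub_le _ _ hf hfV
    have h1 := h0.add_const (∫ z, f z ∂μ)
    rw [zero_add] at h1
    exact h1.congr fun n => by ring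
  -- conclude via dominated convergence for series
  have hsummable : Summable (fun k : ℕ => (L * V x) * r ^ k) :=
    (summable_geometric_of_lt_one hr0 hr1).mul_left _
  have hbound : ∀ n k, ‖kernelFunIter (Pn n) k f x - ∫ z, f z ∂(μn n)‖ ≤ (L * V x) * r ^ k := by
    intro n k
    rw [Real.norm_eq_abs]
    have h := hPn n k x f hf hfV
    have hp : βn n ^ k ≤ r ^ k := pow_le_pow_left₀ (le_of_lt (hβn n).1) (hβnr n) k
    have hrk : 0 ≤ r ^ k := pow_nonneg hr0 k
    have e1 : Cn n * βn n ^ k ≤ Cn n * r ^ k := mul_le_mul_of_nonneg_left hp (hCn0 n)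
    have e2 : Cn n * r ^ k ≤ L * r ^ k := mul_le_mul_of_nonneg_right (hCnL' n) hrk
    have e3 : Cn n * βn n ^ k * V x ≤ (L * r ^ k) * V x :=
      mul_le_mul_of_nonneg_right (e1.trans e2) (by linarith [hV1 x])
    calc |kernelFunIter (Pn n) k f x - ∫ z, f z ∂(μn n)| ≤ Cn n * βn n ^ k * V x := h
      _ ≤ (L * r ^ k) * V x := e3
      _ = L * V x * r ^ k := by ring
  have hterm : ∀ k : ℕ, Tendsto (fun n => kernelFunIter (Pn n) k f x - ∫ z, f z ∂(μn n)) atTop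
      (nhds (kernelFunIter P k f x - ∫ z, f z ∂μ)) := fun k => (hiterconv k x).sub hμf
  unfold resolventFun
  exact tendsto_tsum_of_dominated_convergence hsummable hterm (Eventually.of_forall hbound)
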